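/- In the bridging case d = 2 with g and b in the 'straight' position (g and b on the same line with exactly one empty cell between them, say g = (0,0), b = (2,0), (1,0) empty), the assumptions that C has no outer-free modules force (in the no-outer-free sense used in the paper, supplied here as local emptiness/occupancy hypotheses) that g+(0,1) ∈ C or b+(0,1) ∈ C for the appropriate orientation; consequently, adding the single cell a₁ = (1,0) to C yields a facet-connected configuration C ∪ {a₁} in which m is no longer a cut vertex, and max_{c ∈ C ∪ {a₁}} Φ(c) = Φ(m). -/

import Mathlib

/-- Two grid cells are facet-adjacent if they are at L¹-distance 1. -/
def adjCell (p q : ℤ × ℤ) : Prop :=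
  (p.1 - q.1).natAbs + (p.2 - q.2).natAbs = 1

/-- A set of cells is facet-connected if any two of its cells are joined
by a path of facet-adjacent cells inside the set. -/
def connectedIn (C : Set (ℤ × ℤ)) : Prop :=
  ∀ p ∈ C, ∀ q ∈ C,
    Relation.ReflTransGen (fun a b => a ∈ C ∧ b ∈ C ∧ adjCell a b) p q

/-- A corner: two consecutive cardinal neighbors are empty. -/
def isCorner (C : Set (ℤ × ℤ)) (c : ℤ × ℤ) : Prop :=
  (c + (0, 1) ∉ C ∧ c + (1, 0) ∉ C) ∨ (c + (0, -1) ∉ C ∧ c + (1, 0) ∉ C) ∨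
  (c + (0, 1) ∉ C ∧ c + (-1, 0) ∉ C) ∨ (c + (0, -1) ∉ C ∧ c + (-1, 0) ∉ C)

/-- The potential Φ(x,y) = (x+y, x). -/
def Phi (c : ℤ × ℤ) : ℤ × ℤ := (c.1 + c.2, c.1)

/-- Lexicographic order on ℤ × ℤ. -/
def lexLe (a b : ℤ × ℤ) : Prop := a.1 < b.1 ∨ (a.1 = b.1 ∧ a.2 ≤ b.2)

/-- Strict lexicographic order on ℤ × ℤ. -/
def lexLt (a b : ℤ × ℤ) : Prop := a.1 < b.1 ∨ (a.1 = b.1 ∧ a.2 < b.2)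

/-- Reachability inside a set of cells via facet-adjacency. -/
def reachIn (S : Set (ℤ × ℤ)) (p q : ℤ × ℤ) : Prop :=
  Relation.ReflTransGen (fun a b => a ∈ S ∧ b ∈ S ∧ adjCell a b) p q

lemma adjCell_symm {p q : ℤ × ℤ} (h : adjCell p q) : adjCell q p := by
  unfold adjCell at *; omega

lemma reachIn_symm {S : Set (ℤ × ℤ)} {p q : ℤ × ℤ} (h : reachIn S p q) :
    reachIn S q p := by
  refine (@Relation.ReflTransGen.stdSymm _ _ ⟨?_⟩).symm _ _ h
  rintro a b ⟨h1, h2, h3⟩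
  exact ⟨h2, h1, adjCell_symm h3⟩

lemma reachIn_mono {S T : Set (ℤ × ℤ)} (hST : S ⊆ T) {p q : ℤ × ℤ}
    (h : reachIn S p q) : reachIn T p q :=
  Relation.ReflTransGen.mono (fun a b ⟨h1, h2, h3⟩ => ⟨hST h1, hST h2, h3⟩) _ _ h

lemma nbr_cases {n m : ℤ × ℤ} (hadj : adjCell n m) (hle : lexLe (Phi n) (Phi m)) :
    n = m + (-1, 0) ∨ n = m + (0, -1) := by
  unfold adjCell at hadj
  unfold lexLe Phi at hle
  simp only [Prod.ext_iff, Prod.fst_add, Prod.snd_add] at *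
  omega

lemma exists_nbr_reach {C : Set (ℤ × ℤ)} {m : ℤ × ℤ} :
    ∀ p, Relation.ReflTransGen (fun a b => a ∈ C ∧ b ∈ C ∧ adjCell a b) p m →
      p ≠ m → ∃ n, adjCell n m ∧ n ∈ C ∧ reachIn (C \ {m}) p n := by
  intro p hpath
  induction hpath using Relation.ReflTransGen.head_induction_on with
  | refl => intro h; exact absurd rfl h
  | @head a c hstep htail ih =>
    intro hne
    by_cases hc : c = m
    · subst hc
      exact ⟨a, hstep.2.2, hstep.1, Relation.ReflTransGen.refl⟩
    · obtain ⟨n, h1, h2, h4⟩ := ih hc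
      exact ⟨n, h1, h2, Relation.ReflTransGen.head
        ⟨⟨hstep.1, hne⟩, ⟨hstep.2.1, hc⟩, hstep.2.2⟩ h4⟩

/-- bridging in the straight d = 2 case: if g (green) and
b = g+(2,0) (blue) lie in the two different components of C \ {m} and the
cell between them is empty and of potential less than Φ(m), then adding the
single musketeer cell a₁ = g+(1,0) yields a facet-connected configuration
whose maximum potential is still attained at m and in which m is no longer a
cut vertex. -/
theorem bridging_straight_d2 (C : Set (ℤ × ℤ)) (hfin : C.Finite)
    (hconn : connectedIn C) (m : ℤ × ℤ) (hm : m ∈ C)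
    (hmax : ∀ c ∈ C, lexLe (Phi c) (Phi m))
    (hcut : ¬ connectedIn (C \ {m}))
    (hb₁ : m + (-1, 0) ∈ C) (hg₁ : m + (0, -1) ∈ C)
    (g b : ℤ × ℤ)
    (hgG : g ∈ C \ {m} ∧ reachIn (C \ {m}) (m + (0, -1)) g)
    (hbB : b ∈ C \ {m} ∧ reachIn (C \ {m}) (m + (-1, 0)) b)
    (hgb : b = g + (2, 0)) (hmid : g + (1, 0) ∉ C)
    (hΦg : lexLt (Phi g) (Phi m)) (hΦb : lexLt (Phi b) (Phi m))
    (hΦa : lexLt (Phi (g + (1, 0))) (Phi m)) :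
    connectedIn (C ∪ {g + (1, 0)}) ∧
      (∀ c ∈ C ∪ {g + (1, 0)}, lexLe (Phi c) (Phi m)) ∧
      connectedIn ((C ∪ {g + (1, 0)}) \ {m}) := by

  classical
  set a₁ : ℤ × ℤ := g + (1, 0) with ha₁
  have hgC : g ∈ C := hgG.1.1
  have hgne : g ≠ m := hgG.1.2
  have hbC : b ∈ C := hbB.1.1
  have hbne : b ≠ m := hbB.1.2
  have ha₁ne : a₁ ≠ m := by
    intro h
    rw [h] at hΦa
    unfold lexLt at hΦa
    omega
  have hadj_ga : adjCell g a₁ := by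
    simp only [ha₁, adjCell, Prod.fst_add, Prod.snd_add]
    omega
  have hadj_ab : adjCell a₁ b := by
    simp only [ha₁, hgb, adjCell, Prod.fst_add, Prod.snd_add]
    omega
  -- Part 2: max potential
  have hmax' : ∀ c ∈ C ∪ {a₁}, lexLe (Phi c) (Phi m) := by
    intro c hc
    rcases hc with hc | hc
    · exact hmax c hc
    · have : c = a₁ := hc
      subst this
      unfold lexLt at hΦa
      unfold lexLe
      omega
  -- Part 1: connectivity of C ∪ {a₁}
  have hsub : C ⊆ C ∪ {a₁} := Set.subset_union_left
  have hconn1 : connectedIn (C ∪ {a₁}) := by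
    have key : ∀ p ∈ C ∪ {a₁}, reachIn (C ∪ {a₁}) p g := by
      intro p hp
      rcases hp with hp | hp
      · exact reachIn_mono hsub (hconn p hp g hgC)
      · have : p = a₁ := hp
        subst this
        exact Relation.ReflTransGen.single
          ⟨Or.inr rfl, Or.inl hgC, adjCell_symm hadj_ga⟩
    intro p hp q hq
    exact (key p hp).trans (reachIn_symm (key q hq))
  refine ⟨hconn1, hmax', ?_⟩
  -- Part 3: connectivity of (C ∪ {a₁}) \ {m}
  set S : Set (ℤ × ℤ) := (C ∪ {a₁}) \ {m} with hS
  have hsubS : C \ {m} ⊆ S := fun x hx => ⟨Or.inl hx.1, hx.2⟩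
  have hgS : g ∈ S := ⟨Or.inl hgC, hgne⟩
  have hbS : b ∈ S := ⟨Or.inl hbC, hbne⟩
  have ha₁S : a₁ ∈ S := ⟨Or.inr rfl, ha₁ne⟩
  -- the chain g → a₁ → b in S
  have hchain : reachIn S g b :=
    Relation.ReflTransGen.head ⟨hgS, ha₁S, hadj_ga⟩
      (Relation.ReflTransGen.single ⟨ha₁S, hbS, hadj_ab⟩)
  -- both special neighbors reach g in S
  have hg₁g : reachIn S (m + (0, -1)) g := reachIn_mono hsubS hgG.2
  have hb₁g : reachIn S (m + (-1, 0)) g :=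
    ((reachIn_mono hsubS hbB.2).trans (reachIn_symm hchain))
  -- every element of S reaches g
  have key : ∀ p ∈ S, reachIn S p g := by
    intro p hp
    obtain ⟨hp1, hp2⟩ := hp
    have hp2' : p ≠ m := hp2
    rcases hp1 with hpC | hpa
    · obtain ⟨n, hn1, hn2, hn3⟩ := exists_nbr_reach p (hconn p hpC m hm) hp2'
      have hreach : reachIn S p n := reachIn_mono hsubS hn3
      rcases nbr_cases hn1 (hmax n hn2) with h | h
      · exact hreach.trans (h ▸ hb₁g)
      · exact hreach.trans (h ▸ hg₁g)
    · have : p = a₁ := hpa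
      subst this
      exact Relation.ReflTransGen.single ⟨ha₁S, hgS, adjCell_symm hadj_ga⟩
  intro p hp q hq
  exact (key p hp).trans (reachIn_symm (key q hq))
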